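/- Accuracy-robustness trade-off bounds: with Φ the standard normal CDF, Φ(ε/√λ_max + Φ⁻¹(P_e(θ))) ≤ P'_e(θ) ≤ Φ(ε/√λ_min + Φ⁻¹(P_e(θ))), where P_e(θ) = Φ(−θᵀμ/√(θᵀΣθ)) and P'_e(θ) = Φ((ε‖θ‖−θᵀμ)/√(θᵀΣθ)). -/

import Mathlib

open Real

/-- The Euclidean (2-)norm of a vector in `ℝⁿ`. -/
noncomputable def vecNorm2 {n : ℕ} (θ : Fin n → ℝ) : ℝ :=
  Real.sqrt (∑ i, θ i ^ 2)

/-- The dot product `⟪θ, μ⟫` of two vectors. -/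
def vecDot {n : ℕ} (θ μ : Fin n → ℝ) : ℝ :=
  ∑ i, θ i * μ i

/-- The quadratic form `θᵀ Σ θ`. -/
def quadForm {n : ℕ} (S : Matrix (Fin n) (Fin n) ℝ) (θ : Fin n → ℝ) : ℝ :=
  ∑ i, ∑ j, θ i * S i j * θ j

open Matrix in
lemma quadForm_bounds' {n : ℕ} (S : Matrix (Fin n) (Fin n) ℝ) (hSym : S.IsHermitian)
    (lmin lmax : ℝ)
    (hmin : ∀ i, lmin ≤ hSym.eigenvalues i) (hmax : ∀ i, hSym.eigenvalues i ≤ lmax)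
    (x : Fin n → ℝ) :
    lmin * (x ⬝ᵥ x) ≤ x ⬝ᵥ (S *ᵥ x) ∧ x ⬝ᵥ (S *ᵥ x) ≤ lmax * (x ⬝ᵥ x) := by
  set U : Matrix (Fin n) (Fin n) ℝ := (hSym.eigenvectorUnitary : Matrix (Fin n) (Fin n) ℝ) with hU
  set y : Fin n → ℝ := star U *ᵥ x with hy
  have hvm : vecMul x U = y := by
    ext i
    simp [hy, vecMul, mulVec, dotProduct, star_apply, mul_comm]
  have key : x ⬝ᵥ (S *ᵥ x) = ∑ i, hSym.eigenvalues i * y i ^ 2 := by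
    conv_lhs => rw [hSym.spectral_theorem, Unitary.conjStarAlgAut_apply, ← hU]
    rw [← mulVec_mulVec, ← mulVec_mulVec, dotProduct_mulVec, hvm]
    simp [dotProduct, mulVec_diagonal, Function.comp, mul_comm, sq, mul_assoc, mul_left_comm, ← hy]
  have hstar : star U = Uᵀ := by
    ext i j; simp [Matrix.star_apply]
  have hyy : y ⬝ᵥ y = x ⬝ᵥ x := by
    have h1 : y ⬝ᵥ y = (y ᵥ* star U) ⬝ᵥ x := by rw [hy, dotProduct_mulVec]
    have h2 : y ᵥ* star U = x := by
      have hUU : U * star U = 1 := (Matrix.mem_unitaryGroup_iff).mp hSym.eigenvectorUnitary.2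
      rw [hy, hstar, vecMul_transpose, mulVec_mulVec, ← hstar, hUU, one_mulVec]
    rw [h1, h2]
  have hyy' : x ⬝ᵥ x = ∑ i, y i ^ 2 := by
    rw [← hyy]; simp [dotProduct, sq]
  constructor
  · rw [key, hyy', Finset.mul_sum]
    exact Finset.sum_le_sum fun i _ => mul_le_mul_of_nonneg_right (hmin i) (sq_nonneg _)
  · rw [key, hyy', Finset.mul_sum]
    exact Finset.sum_le_sum fun i _ => mul_le_mul_of_nonneg_right (hmax i) (sq_nonneg _)

/-- Accuracy-robustness trade-off bounds:
`Φ(ε/√λ_max + Φ⁻¹(P_e(θ))) ≤ P'_e(θ) ≤ Φ(ε/√λ_min + Φ⁻¹(P_e(θ)))`, where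
`P_e(θ) = Φ(-θᵀμ/√(θᵀΣθ))` and `P'_e(θ) = Φ((ε‖θ‖₂ - θᵀμ)/√(θᵀΣθ))`. -/
theorem accuracy_robustness_tradeoff {n : ℕ}
    (Φ Φinv : ℝ → ℝ) (hΦ : StrictMono Φ)
    (hrange : ∀ x, Φ x ∈ Set.Ioo (0 : ℝ) 1)
    (hinv : ∀ x, Φinv (Φ x) = x)
    (S : Matrix (Fin n) (Fin n) ℝ) (hSym : S.IsHermitian) (hS : S.PosDef)
    (lmin lmax : ℝ)
    (hlmin : IsLeast (Set.range hSym.eigenvalues) lmin)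
    (hlmax : IsGreatest (Set.range hSym.eigenvalues) lmax)
    (θ μ : Fin n → ℝ) (hθ : θ ≠ 0) (ε : ℝ) (hε : 0 ≤ ε) :
    Φ (ε / Real.sqrt lmax
        + Φinv (Φ (-vecDot θ μ / Real.sqrt (quadForm S θ))))
      ≤ Φ ((ε * vecNorm2 θ - vecDot θ μ) / Real.sqrt (quadForm S θ)) ∧
    Φ ((ε * vecNorm2 θ - vecDot θ μ) / Real.sqrt (quadForm S θ))
      ≤ Φ (ε / Real.sqrt lmin
        + Φinv (Φ (-vecDot θ μ / Real.sqrt (quadForm S θ)))) := by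
  have hmin : ∀ i, lmin ≤ hSym.eigenvalues i := fun i => hlmin.2 ⟨i, rfl⟩
  have hmax : ∀ i, hSym.eigenvalues i ≤ lmax := fun i => hlmax.2 ⟨i, rfl⟩
  -- positivity of lmin, lmax
  have hlmin_pos : 0 < lmin := by
    obtain ⟨i, hi⟩ := hlmin.1
    have := hS.eigenvalues_pos i
    calc (0:ℝ) < hS.1.eigenvalues i := this
      _ = hSym.eigenvalues i := rfl
      _ = lmin := hi
  have hlmax_pos : 0 < lmax := lt_of_lt_of_le hlmin_pos (by
    obtain ⟨i, hi⟩ := hlmin.1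
    exact hi ▸ (hmin i).trans (hmax i))
  set N : ℝ := ∑ i, θ i ^ 2 with hN
  have hNxx : dotProduct θ θ = N := by simp [dotProduct, sq, hN]
  have hNpos : 0 < N := by
    obtain ⟨i, hi⟩ : ∃ i, θ i ≠ 0 := by
      by_contra h; push_neg at h; exact hθ (funext h)
    exact Finset.sum_pos' (fun j _ => sq_nonneg _) ⟨i, Finset.mem_univ i, by positivity⟩
  set q : ℝ := quadForm S θ with hqdef
  have hq : q = dotProduct θ (Matrix.mulVec S θ) := by
    simp [hqdef, quadForm, dotProduct, Matrix.mulVec, Finset.mul_sum, mul_assoc]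
  obtain ⟨hlb, hub⟩ := quadForm_bounds' S hSym lmin lmax hmin hmax θ
  rw [hNxx] at hlb hub
  rw [← hq] at hlb hub
  have hqpos : 0 < q := lt_of_lt_of_le (by positivity) hlb
  have hsq : 0 < Real.sqrt q := Real.sqrt_pos.mpr hqpos
  have hsN : 0 < Real.sqrt N := Real.sqrt_pos.mpr hNpos
  have hsmin : 0 < Real.sqrt lmin := Real.sqrt_pos.mpr hlmin_pos
  have hsmax : 0 < Real.sqrt lmax := Real.sqrt_pos.mpr hlmax_pos
  have hsqub : Real.sqrt q ≤ Real.sqrt lmax * Real.sqrt N := by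
    rw [← Real.sqrt_mul hlmax_pos.le]
    exact Real.sqrt_le_sqrt hub
  have hsqlb : Real.sqrt lmin * Real.sqrt N ≤ Real.sqrt q := by
    rw [← Real.sqrt_mul hlmin_pos.le]
    exact Real.sqrt_le_sqrt hlb
  have hnorm : vecNorm2 θ = Real.sqrt N := rfl
  -- core inequalities
  have key1 : ε / Real.sqrt lmax ≤ ε * Real.sqrt N / Real.sqrt q := by
    rw [div_le_div_iff₀ hsmax hsq]
    calc ε * Real.sqrt q ≤ ε * (Real.sqrt lmax * Real.sqrt N) :=
          mul_le_mul_of_nonneg_left hsqub hε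
      _ = ε * Real.sqrt N * Real.sqrt lmax := by ring
  have key2 : ε * Real.sqrt N / Real.sqrt q ≤ ε / Real.sqrt lmin := by
    rw [div_le_div_iff₀ hsq hsmin]
    calc ε * Real.sqrt N * Real.sqrt lmin = ε * (Real.sqrt lmin * Real.sqrt N) := by ring
      _ ≤ ε * Real.sqrt q := mul_le_mul_of_nonneg_left hsqlb hε
  have hsplit : (ε * vecNorm2 θ - vecDot θ μ) / Real.sqrt q
      = ε * Real.sqrt N / Real.sqrt q + -vecDot θ μ / Real.sqrt q := by
    rw [hnorm]; ring
  rw [hinv]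
  constructor
  · apply hΦ.monotone
    rw [hsplit]
    exact add_le_add_left key1 _
  · apply hΦ.monotone
    rw [hsplit]
    exact add_le_add_left key2 _
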